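/- Let G be a finite non-cyclic group and let h, k ∈ G with ⟨h⟩ ⊆ ⟨k⟩. Then N_h ≤ N_k. That is, the closed-twin counting function a ↦ N_a is monotone on the poset of cyclic subgroups of G. -/

import Mathlib

open Subgroup

def padj {G : Type*} [Group G] (a b : G) : Prop :=
  a ≠ b ∧ (Subgroup.zpowers a ≤ Subgroup.zpowers b ∨ Subgroup.zpowers b ≤ Subgroup.zpowers a)

def pnbhd {G : Type*} [Group G] (a : G) : Set G := {x | padj a x}

def closedTwins {G : Type*} [Group G] (a : G) : Set G :=
  {b | padj a b ∧ pnbhd a \ {b} = pnbhd b \ {a}}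

noncomputable def Ncount {G : Type*} [Group G] (a : G) : ℕ := (closedTwins a).ncard + 1

def eadj {G : Type*} [Group G] (a b : G) : Prop :=
  a ≠ b ∧ ∃ c : G, a ∈ Subgroup.zpowers c ∧ b ∈ Subgroup.zpowers c

namespace PGAux

variable {G : Type*} [Group G]

def cset (a : G) : Set G :=
  {x | Subgroup.zpowers x ≤ Subgroup.zpowers a ∨ Subgroup.zpowers a ≤ Subgroup.zpowers x}

lemma mem_cset_self (a : G) : a ∈ cset a := Or.inl le_rfl

lemma cset_comm {a x : G} (h : x ∈ cset a) : a ∈ cset x := h.symm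

lemma cset_congr {a b : G} (h : Subgroup.zpowers a = Subgroup.zpowers b) : cset a = cset b := by
  unfold cset; rw [h]

end PGAux

namespace PGAux

variable {G : Type*} [Group G]

lemma pnbhd_eq (a : G) : pnbhd a = cset a \ {a} := by
  ext x
  simp only [pnbhd, padj, cset, Set.mem_setOf_eq, Set.mem_diff, Set.mem_singleton_iff]
  constructor
  · rintro ⟨hne, hc⟩; exact ⟨hc.symm, fun hx => hne hx.symm⟩
  · rintro ⟨hc, hne⟩; exact ⟨fun hx => hne hx.symm, hc.symm⟩

lemma closedTwins_eq (a : G) : closedTwins a = {b | b ≠ a ∧ cset b = cset a} := by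
  ext b
  simp only [closedTwins, Set.mem_setOf_eq, pnbhd_eq]
  constructor
  · rintro ⟨⟨hne, hcomp⟩, hEq⟩
    have ha_cb : a ∈ cset b := hcomp
    have hb_ca : b ∈ cset a := hcomp.symm
    refine ⟨hne.symm, ?_⟩
    ext x
    rcases eq_or_ne x a with rfl | hxa
    · exact iff_of_true ha_cb (mem_cset_self _)
    rcases eq_or_ne x b with rfl | hxb
    · exact iff_of_true (mem_cset_self _) hb_ca
    · have h1 := Set.ext_iff.mp hEq x
      simp only [Set.mem_diff, Set.mem_singleton_iff] at h1
      constructor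
      · intro hx; exact (h1.mpr ⟨⟨hx, hxb⟩, hxa⟩).1.1
      · intro hx; exact (h1.mp ⟨⟨hx, hxa⟩, hxb⟩).1.1
  · rintro ⟨hne, hEq⟩
    have hb_ca : b ∈ cset a := hEq ▸ mem_cset_self b
    refine ⟨⟨hne.symm, hb_ca.symm⟩, ?_⟩
    rw [hEq]
    ext x
    simp only [Set.mem_diff, Set.mem_singleton_iff]
    tauto

lemma Ncount_eq [Finite G] (a : G) : Ncount a = ({b | cset b = cset a}).ncard := by
  have h1 : {b | cset b = cset a} = insert a {b : G | b ≠ a ∧ cset b = cset a} := by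
    ext b
    simp only [Set.mem_setOf_eq, Set.mem_insert_iff]
    rcases eq_or_ne b a with rfl | hb
    · simp
    · simp [hb]
  rw [Ncount, closedTwins_eq, h1, Set.ncard_insert_of_notMem (by simp)]

end PGAux

namespace PGAux

variable {G : Type*} [Group G]

lemma isCyclic_zpowers (b : G) : IsCyclic (Subgroup.zpowers b) :=
  ⟨⟨b, Subgroup.mem_zpowers b⟩, fun x => by
    obtain ⟨n, hn⟩ := Subgroup.mem_zpowers_iff.mp x.2
    exact Subgroup.mem_zpowers_iff.mpr ⟨n, Subtype.ext (by simpa using hn)⟩⟩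

lemma mem_zpowers_of_orderOf_dvd_aux {α : Type*} [Group α] [Finite α] [IsCyclic α]
    {x z : α} (hd : orderOf x ∣ orderOf z) : x ∈ Subgroup.zpowers z := by
  classical
  cases nonempty_fintype α
  have hn : 0 < orderOf z := orderOf_pos z
  have hsub : (Subgroup.zpowers z : Set α).toFinset ⊆
      Finset.univ.filter (fun a : α => a ^ orderOf z = 1) := by
    intro a ha
    rw [Set.mem_toFinset] at ha
    have ha' : a ∈ Subgroup.zpowers z := ha
    exact Finset.mem_filter.mpr ⟨Finset.mem_univ _,
      orderOf_dvd_iff_pow_eq_one.mp (orderOf_dvd_of_mem_zpowers ha')⟩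
  have hcard : (Finset.univ.filter (fun a : α => a ^ orderOf z = 1)).card ≤
      (Subgroup.zpowers z : Set α).toFinset.card := by
    have h1 := IsCyclic.card_pow_eq_one_le (α := α) hn
    have h2 : (Subgroup.zpowers z : Set α).toFinset.card = orderOf z := by
      rw [Set.toFinset_card, ← Nat.card_eq_fintype_card]
      exact Nat.card_zpowers z
    rw [h2]
    convert h1 using 2

  have heq := Finset.eq_of_subset_of_card_le hsub hcard
  have hx : x ∈ Finset.univ.filter (fun a : α => a ^ orderOf z = 1) :=
    Finset.mem_filter.mpr ⟨Finset.mem_univ _, orderOf_dvd_iff_pow_eq_one.mp hd⟩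
  rw [← heq, Set.mem_toFinset] at hx
  exact SetLike.mem_coe.mp hx

lemma mem_zpowers_of_orderOf_dvd [Finite G] {b x z : G} (hx : x ∈ Subgroup.zpowers b)
    (hz : z ∈ Subgroup.zpowers b) (hd : orderOf x ∣ orderOf z) : x ∈ Subgroup.zpowers z := by
  haveI := isCyclic_zpowers b
  have hd' : orderOf (⟨x, hx⟩ : Subgroup.zpowers b) ∣ orderOf (⟨z, hz⟩ : Subgroup.zpowers b) := by
    rwa [Subgroup.orderOf_mk, Subgroup.orderOf_mk]
  obtain ⟨n, hn⟩ := Subgroup.mem_zpowers_iff.mp (mem_zpowers_of_orderOf_dvd_aux hd')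
  exact Subgroup.mem_zpowers_iff.mpr ⟨n, by simpa using congrArg Subtype.val hn⟩

lemma ncard_gens [Finite G] (g : G) :
    {x : G | Subgroup.zpowers x = Subgroup.zpowers g}.ncard = (orderOf g).totient := by
  classical
  cases nonempty_fintype G
  haveI := isCyclic_zpowers g
  have himg : {x : G | Subgroup.zpowers x = Subgroup.zpowers g} =
      (fun y : Subgroup.zpowers g => (y : G)) ''
        {y : Subgroup.zpowers g | orderOf y = orderOf g} := by
    ext x
    constructor
    · intro hx
      have hx' : Subgroup.zpowers x = Subgroup.zpowers g := hx
      have hxg : x ∈ Subgroup.zpowers g := hx' ▸ Subgroup.mem_zpowers x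
      refine ⟨⟨x, hxg⟩, ?_, rfl⟩
      have hor : orderOf x = orderOf g := by
        rw [← Nat.card_zpowers, ← Nat.card_zpowers, hx']
      simpa only [Set.mem_setOf_eq, Subgroup.orderOf_mk] using hor
    · rintro ⟨⟨y, hy⟩, hmem, rfl⟩
      simp only [Set.mem_setOf_eq, Subgroup.orderOf_mk] at hmem
      have hle : Subgroup.zpowers y ≤ Subgroup.zpowers g := Subgroup.zpowers_le.mpr hy
      exact Subgroup.eq_of_le_of_card_ge hle
        (by rw [Nat.card_zpowers, Nat.card_zpowers, hmem])
  rw [himg, Set.ncard_image_of_injective _ Subtype.val_injective]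
  have hcard : ({y : Subgroup.zpowers g | orderOf y = orderOf g}).ncard
      = (Finset.univ.filter fun y : Subgroup.zpowers g => orderOf y = orderOf g).card := by
    rw [Set.ncard_eq_toFinset_card']
    congr 1
    ext y
    simp
  rw [hcard]
  have hd : orderOf g ∣ Fintype.card (Subgroup.zpowers g) := by
    rw [← Nat.card_eq_fintype_card, Nat.card_zpowers]
  have hres := IsCyclic.card_orderOf_eq_totient (α := Subgroup.zpowers g) hd
  rw [← hres]

end PGAux

namespace PGAux

variable {G : Type*} [Group G]

lemma mem_zpowers_of_forall_primepow [Finite G] {y : G}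
    (H : ∀ t : G, IsPrimePow (orderOf t) → t ∈ Subgroup.zpowers y) :
    ∀ (n : ℕ) (g : G), orderOf g = n → g ∈ Subgroup.zpowers y := by
  intro n
  induction n using Nat.strong_induction_on with
  | _ n ih =>
    intro g hg
    rcases eq_or_ne n 1 with rfl | hn1
    · rw [orderOf_eq_one_iff.mp hg]; exact Subgroup.one_mem _
    by_cases hpp : IsPrimePow n
    · exact H g (hg ▸ hpp)
    have hn0 : n ≠ 0 := by
      rintro rfl
      exact (orderOf_pos g).ne' hg
    set p := n.minFac with hp_def
    have hp : p.Prime := Nat.minFac_prime hn1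
    have hpdvd : p ∣ n := Nat.minFac_dvd n
    set a := n.factorization p with ha_def
    have ha1 : 0 < a := hp.factorization_pos_of_dvd hn0 hpdvd
    set m1 := p ^ a with hm1_def
    have hm1dvd : m1 ∣ n := Nat.ordProj_dvd n p
    have hm1pp : IsPrimePow m1 := ⟨p, a, hp.prime, ha1, rfl⟩
    have hm1two : 2 ≤ m1 := le_trans hp.two_le (Nat.le_self_pow ha1.ne' p)
    have hm1ne1 : m1 ≠ 1 := by omega
    set m2 := n / m1 with hm2_def
    have hn_eq : m1 * m2 = n := Nat.mul_div_cancel' hm1dvd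
    have hm2dvd : m2 ∣ n := Nat.div_dvd_of_dvd hm1dvd
    have hcop : Nat.Coprime m1 m2 := (Nat.coprime_ordCompl hp hn0).pow_left a
    have hm2ne0 : m2 ≠ 0 := by
      intro h; rw [h, mul_zero] at hn_eq; exact hn0 hn_eq.symm
    have hm1ne0 : m1 ≠ 0 := pow_ne_zero a hp.pos.ne'
    have hm2ne1 : m2 ≠ 1 := by
      intro h
      apply hpp
      rw [← hn_eq, h, mul_one]
      exact hm1pp
    have hm2ltn : m2 < n := by
      rw [← hn_eq]
      exact (Nat.lt_mul_iff_one_lt_left (Nat.pos_of_ne_zero hm2ne0)).mpr (by omega)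
    have horder1 : orderOf (g ^ m1) = m2 := by
      rw [orderOf_pow' g hm1ne0, hg, Nat.gcd_eq_right hm1dvd]
    have horder2 : orderOf (g ^ m2) = m1 := by
      rw [orderOf_pow' g hm2ne0, hg, Nat.gcd_eq_right hm2dvd, Nat.div_div_self hm1dvd hn0]
    have hmem1 : g ^ m1 ∈ Subgroup.zpowers y := ih m2 hm2ltn _ horder1
    have hmem2 : g ^ m2 ∈ Subgroup.zpowers y := H _ (horder2 ▸ hm1pp)
    set A := Nat.gcdA m1 m2
    set B := Nat.gcdB m1 m2
    have hbez : (1 : ℤ) = m1 * A + m2 * B := by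
      have := Nat.gcd_eq_gcd_ab m1 m2
      rwa [hcop, Nat.cast_one] at this
    have hgeq : g = (g ^ (m1 : ℤ)) ^ A * (g ^ (m2 : ℤ)) ^ B := by
      rw [← zpow_mul, ← zpow_mul, ← zpow_add, ← hbez, zpow_one]
    rw [hgeq]
    exact Subgroup.mul_mem _
      (Subgroup.zpow_mem _ (by rw [zpow_natCast]; exact hmem1) A)
      (Subgroup.zpow_mem _ (by rw [zpow_natCast]; exact hmem2) B)

end PGAux

namespace PGAux

variable {G : Type*} [Group G]

lemma cset_one : cset (1 : G) = Set.univ := by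
  ext x
  simp only [Set.mem_univ, iff_true]
  exact Or.inr (by rw [Subgroup.zpowers_one_eq_bot]; exact bot_le)

lemma isPrimePow_orderOf_of_cset_eq [Finite G] (hnc : ¬ IsCyclic G) {x y : G}
    (hlt : Subgroup.zpowers x < Subgroup.zpowers y) (hS : cset x = cset y) :
    IsPrimePow (orderOf y) := by
  by_contra hnp
  set n := orderOf y with hn_def
  have hy1 : y ≠ 1 := by
    rintro rfl
    rw [Subgroup.zpowers_one_eq_bot] at hlt
    exact not_lt_bot hlt
  have hn1 : n ≠ 1 := fun hh => hy1 (orderOf_eq_one_iff.mp hh)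
  have hn0 : n ≠ 0 := (orderOf_pos y).ne'
  have hxmem : x ∈ Subgroup.zpowers y := Subgroup.zpowers_le.mp hlt.le
  set d := orderOf x with hd_def
  have hddvd : d ∣ n := orderOf_dvd_of_mem_zpowers hxmem
  have hdn : d ≠ n := by
    intro hh
    exact hlt.ne (Subgroup.eq_of_le_of_card_ge hlt.le
      (by rw [Nat.card_zpowers, Nat.card_zpowers]; exact hh.ge))
  have key : ∀ e : ℕ, e ∣ n → ¬ e ∣ d → ¬ d ∣ e → False := by
    intro e hen hed hde
    set z := y ^ (n / e) with hz
    have hmule : e * (n / e) = n := Nat.mul_div_cancel' hen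
    have hne0 : n / e ≠ 0 := by
      intro h0
      rw [h0, mul_zero] at hmule
      exact hn0 hmule.symm
    have hoz : orderOf z = e := by
      rw [hz, orderOf_pow' y hne0, ← hn_def, Nat.gcd_eq_right (Nat.div_dvd_of_dvd hen),
        Nat.div_div_self hen hn0]
    have hmemz : z ∈ Subgroup.zpowers y :=
      Subgroup.mem_zpowers_iff.mpr ⟨((n / e : ℕ) : ℤ), by rw [zpow_natCast]⟩
    have hzy : z ∈ cset y := Or.inl (Subgroup.zpowers_le.mpr hmemz)
    have hzx : z ∈ cset x := hS ▸ hzy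
    rcases hzx with h1 | h2
    · exact hed (hoz ▸ orderOf_dvd_of_mem_zpowers (Subgroup.zpowers_le.mp h1))
    · exact hde (hoz ▸ orderOf_dvd_of_mem_zpowers (Subgroup.zpowers_le.mp h2))
  rcases eq_or_ne d 1 with hd1 | hd1
  · have hx1 : x = 1 := orderOf_eq_one_iff.mp hd1
    have huniv : cset y = Set.univ := by rw [← hS, hx1, cset_one]
    have hkey : ∀ t : G, IsPrimePow (orderOf t) → t ∈ Subgroup.zpowers y := by
      intro t hppt
      have ht : t ∈ cset y := huniv ▸ Set.mem_univ t
      rcases ht with h1 | h2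
      · exact Subgroup.zpowers_le.mp h1
      · exfalso
        obtain ⟨q, kk, hq, hk, hqk⟩ := hppt
        have hyt : y ∈ Subgroup.zpowers t := Subgroup.zpowers_le.mp h2
        have hdvd : n ∣ q ^ kk := hqk ▸ orderOf_dvd_of_mem_zpowers hyt
        obtain ⟨i, hik, hni⟩ := (Nat.dvd_prime_pow hq.nat_prime).mp hdvd
        have hi0 : i ≠ 0 := by rintro rfl; rw [pow_zero] at hni; exact hn1 hni
        exact hnp ⟨q, i, hq, Nat.pos_of_ne_zero hi0, hni.symm⟩
    exact hnc ⟨⟨y, fun g => mem_zpowers_of_forall_primepow hkey (orderOf g) g rfl⟩⟩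
  · have hd0 : d ≠ 0 := (orderOf_pos x).ne'
    have hmul : d * (n / d) = n := Nat.mul_div_cancel' hddvd
    have hnd1 : n / d ≠ 1 := by
      intro hh
      rw [hh, mul_one] at hmul
      exact hdn hmul
    set p := (n / d).minFac with hp_def
    have hp : p.Prime := Nat.minFac_prime hnd1
    have hpdvd_nd : p ∣ n / d := Nat.minFac_dvd _
    set v := d.factorization p with hv
    have hpv1_dvd_n : p ^ (v + 1) ∣ n := by
      rw [pow_succ, ← hmul]
      exact mul_dvd_mul (Nat.ordProj_dvd d p) hpdvd_nd
    by_cases hdpp : ∃ c, d = p ^ c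
    · obtain ⟨c, hc⟩ := hdpp
      have hc0 : c ≠ 0 := by rintro rfl; rw [pow_zero] at hc; exact hd1 hc
      have hqex : ∃ q, q.Prime ∧ q ∣ n ∧ q ≠ p := by
        by_contra hq
        push_neg at hq
        have hnpp : n = p ^ n.primeFactorsList.length :=
          Nat.eq_prime_pow_of_unique_prime_dvd hn0 (fun {r} hr hrn => hq r hr hrn)
        have hlen : n.primeFactorsList.length ≠ 0 := by
          intro h0
          rw [h0, pow_zero] at hnpp
          exact hn1 hnpp
        exact hnp ⟨p, _, hp.prime, Nat.pos_of_ne_zero hlen, hnpp.symm⟩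
      obtain ⟨q, hq, hqn, hqp⟩ := hqex
      refine key q hqn ?_ ?_
      · intro hqd
        rw [hc] at hqd
        exact hqp ((Nat.prime_dvd_prime_iff_eq hq hp).mp (hq.dvd_of_dvd_pow hqd))
      · intro hdq
        rcases (Nat.Prime.eq_one_or_self_of_dvd hq d hdq) with h' | h'
        · exact hd1 h'
        · have hpd : p ∣ d := by
            rw [hc]
            exact dvd_pow_self p hc0
          rw [h'] at hpd
          exact hqp ((Nat.prime_dvd_prime_iff_eq hp hq).mp hpd).symm
    · refine key (p ^ (v + 1)) hpv1_dvd_n ?_ ?_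
      · intro hdvd
        have := (Nat.Prime.pow_dvd_iff_le_factorization hp hd0).mp hdvd
        omega
      · intro hdvd
        obtain ⟨c, _, hc⟩ := (Nat.dvd_prime_pow hp).mp hdvd
        exact hdpp ⟨c, hc⟩

end PGAux


open PGAux

theorem stmt13 {G : Type*} [Group G] [Finite G] (hnc : ¬ IsCyclic G)
    (h k : G) (hsub : Subgroup.zpowers h ≤ Subgroup.zpowers k) :
    Ncount h ≤ Ncount k := by
  classical
  rw [Ncount_eq, Ncount_eq]
  by_cases hS : cset h = cset k
  · exact le_of_eq (by rw [hS])
  set n := orderOf k with hn_def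
  have hn0 : n ≠ 0 := (orderOf_pos k).ne'
  have hne : Subgroup.zpowers h ≠ Subgroup.zpowers k := fun hh => hS (cset_congr hh)
  have hlt : Subgroup.zpowers h < Subgroup.zpowers k := lt_of_le_of_ne hsub hne
  set T : Set G := {b | cset b = cset h} with hT
  have hkch : k ∈ cset h := Or.inr hsub
  have hstepA : ∀ b ∈ T, b ∈ Subgroup.zpowers k ∧ Subgroup.zpowers b ≠ Subgroup.zpowers k := by
    intro b hb
    have hcb : cset b = cset h := hb
    have hkcb : k ∈ cset b := by rw [hcb]; exact hkch
    have hbne : Subgroup.zpowers b ≠ Subgroup.zpowers k := by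
      intro hh
      exact hS (hcb.symm.trans (cset_congr hh))
    rcases hkcb with h1 | h2
    · exfalso
      have hhlb : Subgroup.zpowers h < Subgroup.zpowers b := lt_of_lt_of_le hlt h1
      obtain ⟨p, r, hpP, hr, hpr⟩ := isPrimePow_orderOf_of_cset_eq hnc hhlb hcb.symm
      have hp : p.Prime := hpP.nat_prime
      apply hS
      have hkb : k ∈ Subgroup.zpowers b := Subgroup.zpowers_le.mp h1
      have hhb : h ∈ Subgroup.zpowers b := Subgroup.zpowers_le.mp (le_trans hsub h1)
      have comp : ∀ w u : G, w ∈ Subgroup.zpowers b → u ∈ Subgroup.zpowers b →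
          w ∈ Subgroup.zpowers u ∨ u ∈ Subgroup.zpowers w := by
        intro w u hw hu
        have hwd : orderOf w ∣ p ^ r := hpr ▸ orderOf_dvd_of_mem_zpowers hw
        have hud : orderOf u ∣ p ^ r := hpr ▸ orderOf_dvd_of_mem_zpowers hu
        obtain ⟨i, hir, hi⟩ := (Nat.dvd_prime_pow hp).mp hwd
        obtain ⟨j, hjr, hj⟩ := (Nat.dvd_prime_pow hp).mp hud
        rcases le_total i j with hij | hij
        · exact Or.inl (mem_zpowers_of_orderOf_dvd hw hu
            (by rw [hi, hj]; exact pow_dvd_pow p hij))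
        · exact Or.inr (mem_zpowers_of_orderOf_dvd hu hw
            (by rw [hi, hj]; exact pow_dvd_pow p hij))
      ext z
      constructor
      · intro hz
        have hz' : z ∈ cset b := by rw [hcb]; exact hz
        rcases hz with hz1 | hz2
        · exact Or.inl (le_trans hz1 hsub)
        · rcases hz' with hz1' | hz2'
          · rcases comp z k (Subgroup.zpowers_le.mp hz1') hkb with hm | hm
            · exact Or.inl (Subgroup.zpowers_le.mpr hm)
            · exact Or.inr (Subgroup.zpowers_le.mpr hm)
          · exact Or.inr (le_trans h1 hz2')
      · intro hz
        rcases hz with hz1 | hz2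
        · rcases comp z h (Subgroup.zpowers_le.mp (le_trans hz1 h1)) hhb with hm | hm
          · exact Or.inl (Subgroup.zpowers_le.mpr hm)
          · exact Or.inr (Subgroup.zpowers_le.mpr hm)
        · exact Or.inr (le_trans hsub hz2)
    · exact ⟨Subgroup.zpowers_le.mp h2, hbne⟩
  have hTfin : T.Finite := Set.toFinite T
  have hTne : T.Nonempty := ⟨h, rfl⟩
  obtain ⟨bm, hbmT, hmax⟩ := Set.Finite.exists_maximalFor orderOf T hTfin hTne
  have hTsub : ∀ b ∈ T, b ∈ Subgroup.zpowers bm := by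
    intro b hb
    have hbm_cb : bm ∈ cset b := by
      rw [show cset b = cset h from hb, ← show cset bm = cset h from hbmT]
      exact mem_cset_self bm
    rcases hbm_cb with h1 | h2
    · have hdvd : orderOf bm ∣ orderOf b :=
        orderOf_dvd_of_mem_zpowers (Subgroup.zpowers_le.mp h1)
      have heq : orderOf bm = orderOf b := le_antisymm (Nat.le_of_dvd (orderOf_pos b) hdvd) (hmax hb (Nat.le_of_dvd (orderOf_pos b) hdvd))
      have hzeq : Subgroup.zpowers bm = Subgroup.zpowers b :=
        Subgroup.eq_of_le_of_card_ge h1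
          (by rw [Nat.card_zpowers, Nat.card_zpowers]; exact heq.ge)
      exact hzeq ▸ Subgroup.mem_zpowers b
    · exact Subgroup.zpowers_le.mp h2
  obtain ⟨hbmk, hbmne⟩ := hstepA bm hbmT
  have hordbm_dvd : orderOf bm ∣ n := orderOf_dvd_of_mem_zpowers hbmk
  have hordbm_ne : orderOf bm ≠ n := by
    intro hh
    exact hbmne (Subgroup.eq_of_le_of_card_ge (Subgroup.zpowers_le.mpr hbmk)
      (by rw [Nat.card_zpowers, Nat.card_zpowers]; exact hh.ge))
  have hfinal : T.ncard ≤ n.totient := by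
    by_cases hall : ∀ b ∈ T, Subgroup.zpowers b = Subgroup.zpowers bm
    · have hsubgens : T ⊆ {x : G | Subgroup.zpowers x = Subgroup.zpowers bm} :=
        fun b hb => hall b hb
      calc T.ncard ≤ ({x : G | Subgroup.zpowers x = Subgroup.zpowers bm}).ncard :=
            Set.ncard_le_ncard hsubgens (Set.toFinite _)
        _ = (orderOf bm).totient := ncard_gens bm
        _ ≤ n.totient :=
            Nat.le_of_dvd (Nat.totient_pos.mpr (Nat.pos_of_ne_zero hn0))
              (Nat.totient_dvd_of_dvd hordbm_dvd)
    · push_neg at hall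
      obtain ⟨b0, hb0T, hb0ne⟩ := hall
      have hb0lt : Subgroup.zpowers b0 < Subgroup.zpowers bm :=
        lt_of_le_of_ne (Subgroup.zpowers_le.mpr (hTsub b0 hb0T)) hb0ne
      obtain ⟨p, r, hpP, hr, hpr⟩ := isPrimePow_orderOf_of_cset_eq hnc hb0lt
        (by rw [show cset b0 = cset h from hb0T, show cset bm = cset h from hbmT])
      have hp : p.Prime := hpP.nat_prime
      have hob0_dvd : orderOf b0 ∣ orderOf bm :=
        orderOf_dvd_of_mem_zpowers (hTsub b0 hb0T)
      obtain ⟨s, hsr, hs⟩ := (Nat.dvd_prime_pow hp).mp (hpr ▸ hob0_dvd)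
      have hslt : s < r := by
        rcases lt_or_eq_of_le hsr with hlt' | heq'
        · exact hlt'
        · exfalso
          apply hb0ne
          apply Subgroup.eq_of_le_of_card_ge (Subgroup.zpowers_le.mpr (hTsub b0 hb0T))
          rw [Nat.card_zpowers, Nat.card_zpowers, hs, heq', hpr]
      have hunique : ∀ {q : ℕ}, q.Prime → q ∣ n → q = p := by
        intro q hq hqn
        by_contra hqp
        have hcopr : Nat.Coprime q (p ^ s) :=
          ((Nat.coprime_primes hq hp).mpr hqp).pow_right s
        have hps_dvd_n : p ^ s ∣ n := dvd_trans (hs ▸ hob0_dvd) hordbm_dvd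
        have he_dvd : q * p ^ s ∣ n := Nat.Coprime.mul_dvd_of_dvd_of_dvd hcopr hqn hps_dvd_n
        set e := q * p ^ s with he
        set u := k ^ (n / e) with hu
        have hmule : e * (n / e) = n := Nat.mul_div_cancel' he_dvd
        have hne0 : n / e ≠ 0 := by
          intro h0
          rw [h0, mul_zero] at hmule
          exact hn0 hmule.symm
        have hou : orderOf u = e := by
          rw [hu, orderOf_pow' k hne0, ← hn_def, Nat.gcd_eq_right (Nat.div_dvd_of_dvd he_dvd),
            Nat.div_div_self he_dvd hn0]
        have humem : u ∈ Subgroup.zpowers k :=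
          Subgroup.mem_zpowers_iff.mpr ⟨((n / e : ℕ) : ℤ), by rw [zpow_natCast]⟩
        have hb0u : b0 ∈ Subgroup.zpowers u :=
          mem_zpowers_of_orderOf_dvd (hstepA b0 hb0T).1 humem
            (by rw [hou, hs]; exact dvd_mul_left _ _)
        have hucbm : u ∈ cset bm := by
          rw [show cset bm = cset h from hbmT, ← show cset b0 = cset h from hb0T]
          exact Or.inr (Subgroup.zpowers_le.mpr hb0u)
        rcases hucbm with h1 | h2
        · have hedvd : e ∣ p ^ r := by
            rw [← hou, hpr]
            exact orderOf_dvd_of_mem_zpowers (Subgroup.zpowers_le.mp h1)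
          have hq_dvd : q ∣ p ^ r := dvd_trans (dvd_mul_right q _) hedvd
          exact hqp ((Nat.prime_dvd_prime_iff_eq hq hp).mp (hq.dvd_of_dvd_pow hq_dvd))
        · have hdvd2 : p ^ r ∣ q * p ^ s := by
            have h3 : orderOf bm ∣ orderOf u :=
              orderOf_dvd_of_mem_zpowers (Subgroup.zpowers_le.mp h2)
            rwa [← hpr, hou, he] at h3
          have hprps : p ^ r ∣ p ^ s :=
            Nat.Coprime.dvd_of_dvd_mul_left
              (((Nat.coprime_primes hp hq).mpr (Ne.symm hqp)).pow_left r) hdvd2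
          have := (Nat.pow_dvd_pow_iff_le_right hp.one_lt).mp hprps
          omega
      have hnt : n = p ^ n.primeFactorsList.length :=
        Nat.eq_prime_pow_of_unique_prime_dvd hn0 hunique
      set t := n.primeFactorsList.length with ht_def
      have hrt : r < t := by
        have h1 : p ^ r ∣ p ^ t := by rw [← hnt, hpr]; exact hordbm_dvd
        have h2 : r ≤ t := (Nat.pow_dvd_pow_iff_le_right hp.one_lt).mp h1
        rcases lt_or_eq_of_le h2 with hh | hh
        · exact hh
        · exfalso
          apply hordbm_ne
          rw [← hpr, hh, ← hnt]
      have hTsub' : T ⊆ (Subgroup.zpowers bm : Set G) := fun b hb => hTsub b hb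
      calc T.ncard ≤ (Subgroup.zpowers bm : Set G).ncard :=
            Set.ncard_le_ncard hTsub' (Set.toFinite _)
        _ = p ^ r := by
            rw [← Nat.card_coe_set_eq, SetLike.coe_sort_coe, Nat.card_zpowers, ← hpr]
        _ ≤ n.totient := by
            rw [hnt, Nat.totient_prime_pow hp (by omega : 0 < t)]
            calc p ^ r ≤ p ^ (t - 1) := Nat.pow_le_pow_right hp.pos (by omega)
              _ ≤ p ^ (t - 1) * (p - 1) :=
                  Nat.le_mul_of_pos_right _ (by have := hp.two_le; omega)
  have hgensk : {x : G | Subgroup.zpowers x = Subgroup.zpowers k} ⊆ {b | cset b = cset k} :=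
    fun x hx => cset_congr hx
  calc T.ncard ≤ n.totient := hfinal
    _ = ({x : G | Subgroup.zpowers x = Subgroup.zpowers k}).ncard := (ncard_gens k).symm
    _ ≤ ({b | cset b = cset k}).ncard := Set.ncard_le_ncard hgensk (Set.toFinite _)
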